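/- Let f: Y → X be a finite morphism of noetherian integral schemes, L a line bundle on Y, and p ∈ X a point. Then there exists an open subset U ⊆ X containing p such that the restriction of L to f^{-1}(U) is trivial, i.e. isomorphic to O_{f^{-1}(U)}. -/

import Mathlib

open LocalizedModule IsLocalizedModule

/-- Upgrade an `R`-linear equivalence between modules over a localization to a linear
equivalence over the localization. -/
noncomputable def LinearEquiv.extendScalarsOfIsLocalization' {R : Type*} [CommSemiring R]
    (S : Submonoid R) (A : Type*) [CommSemiring A] [Algebra R A] [IsLocalization S A]
    {M N : Type*} [AddCommMonoid M] [Module R M] [Module A M] [IsScalarTower R A M]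
    [AddCommMonoid N] [Module R N] [Module A N] [IsScalarTower R A N]
    (e : M ≃ₗ[R] N) : M ≃ₗ[A] N :=
  LinearEquiv.ofBijective (e.toLinearMap.extendScalarsOfIsLocalization S A) e.bijective

/-- A module over a ring with finitely many maximal ideals which is locally free of rank one
at every maximal ideal is free of rank one. -/
theorem key_semilocal {A : Type*} [CommRing A] {M : Type*} [AddCommGroup M] [Module A M]
    (hfin : {m : Ideal A | m.IsMaximal}.Finite)
    (h : ∀ (P : Ideal A) [P.IsMaximal],
      Nonempty (LocalizedModule P.primeCompl M ≃ₗ[Localization.AtPrime P]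
        Localization.AtPrime P)) :
    Nonempty (M ≃ₗ[A] A) := by
  classical
  have e : ∀ (P : Ideal A) [P.IsMaximal],
      (LocalizedModule P.primeCompl M ≃ₗ[Localization.AtPrime P] Localization.AtPrime P) :=
    fun P _ => (h P).some
  let E : ∀ (P : Ideal A) [P.IsMaximal], (LocalizedModule P.primeCompl M ≃ₗ[A] Localization.AtPrime P) :=
    fun P _ => (e P).restrictScalars A
  let ψ : ∀ (P : Ideal A) [P.IsMaximal], (M →ₗ[A] Localization.AtPrime P) :=
    fun P _ => (E P).toLinearMap ∘ₗ LocalizedModule.mkLinearMap P.primeCompl M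
  have hy : ∀ (P : Ideal A) [P.IsMaximal], ∃ y : M, IsUnit (ψ P y) := by
    intro P hP
    obtain ⟨⟨y, t⟩, hyt⟩ := IsLocalizedModule.surj P.primeCompl
      (LocalizedModule.mkLinearMap P.primeCompl M) ((E P).symm 1)
    refine ⟨y, ?_⟩
    have h1 : ψ P y = (t : A) • (1 : Localization.AtPrime P) := by
      have h0 : (E P) ((LocalizedModule.mkLinearMap P.primeCompl M) y)
          = (E P) (t • ((E P).symm 1)) := by rw [hyt]
      rw [Submonoid.smul_def, map_smul, LinearEquiv.apply_symm_apply] at h0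
      simpa [ψ] using h0
    rw [h1, Algebra.smul_def, mul_one]
    exact IsLocalization.map_units _ t
  let y : ∀ (P : Ideal A) [P.IsMaximal], M := fun P _ => (hy P).choose
  have hyu : ∀ (P : Ideal A) [P.IsMaximal], IsUnit (ψ P (y P)) := fun P _ => (hy P).choose_spec
  set s : Finset (Ideal A) := hfin.toFinset with hs
  have hmem : ∀ P ∈ s, P.IsMaximal := fun P hP => hfin.mem_toFinset.mp hP
  have hc : ∀ (P : Ideal A) [P.IsMaximal], ∃ c : A, (∀ Q ∈ s.erase P, c ∈ Q) ∧ c ∉ P := by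
    intro P hP
    have hle : ¬ ((s.erase P).inf id ≤ P) := by
      intro hle
      obtain ⟨j, hj, hjP⟩ := (Ideal.IsPrime.inf_le' hP.isPrime).mp hle
      exact (Finset.mem_erase.mp hj).1 ((hmem j (Finset.mem_of_mem_erase hj)).eq_of_le
        hP.ne_top hjP)
    obtain ⟨c, hcmem, hcP⟩ := SetLike.not_le_iff_exists.mp hle
    exact ⟨c, fun Q hQ => (Finset.inf_le hQ : (s.erase P).inf id ≤ id Q) hcmem, hcP⟩
  let c : ∀ (P : Ideal A) [P.IsMaximal], A := fun P _ => (hc P).choose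
  have hc1 : ∀ (P : Ideal A) [P.IsMaximal], ∀ Q ∈ s.erase P, c P ∈ Q :=
    fun P _ => (hc P).choose_spec.1
  have hc2 : ∀ (P : Ideal A) [P.IsMaximal], c P ∉ P := fun P _ => (hc P).choose_spec.2
  let x : M := ∑ P ∈ s.attach,
    haveI := hmem P.1 P.2
    c P.1 • y P.1
  have hxu : ∀ (P : Ideal A) [P.IsMaximal], IsUnit (ψ P x) := by
    intro P hP
    have hPs : P ∈ s := hfin.mem_toFinset.mpr hP
    by_contra hnu
    have hmm : ψ P x ∈ IsLocalRing.maximalIdeal (Localization.AtPrime P) :=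
      (IsLocalRing.mem_maximalIdeal _).mpr (mem_nonunits_iff.mpr hnu)
    have hsum : ψ P x = ∑ Q ∈ s.attach,
        haveI := hmem Q.1 Q.2
        c Q.1 • ψ P (y Q.1) := by
      simp only [x, map_sum, map_smul]
    have hPP : (⟨P, hPs⟩ : {z // z ∈ s}) ∈ s.attach := Finset.mem_attach _ _
    rw [← Finset.add_sum_erase _ _ hPP] at hsum
    have hterm : (∑ Q ∈ s.attach.erase ⟨P, hPs⟩,
        haveI := hmem Q.1 Q.2
        c Q.1 • ψ P (y Q.1))
        ∈ IsLocalRing.maximalIdeal (Localization.AtPrime P) := by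
      refine Ideal.sum_mem _ (fun Q hQ => ?_)
      haveI := hmem Q.1 Q.2
      have hQP : P ≠ Q.1 := fun hEq => (Finset.mem_erase.mp hQ).1 (Subtype.ext hEq.symm)
      have hcQ : c Q.1 ∈ P := hc1 Q.1 P (Finset.mem_erase.mpr ⟨hQP, hPs⟩)
      rw [Algebra.smul_def]
      exact Ideal.mul_mem_right _ _
        ((IsLocalization.AtPrime.to_map_mem_maximal_iff _ P _).mpr hcQ)
    have hu : IsUnit (c P • ψ P (y P)) := by
      rw [Algebra.smul_def]
      exact ((IsLocalization.AtPrime.isUnit_to_map_iff _ P _).mpr (hc2 P)).mul (hyu P)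
    have hmem2 : c P • ψ P (y P) ∈ IsLocalRing.maximalIdeal (Localization.AtPrime P) := by
      have h2 : c P • ψ P (y P) = ψ P x - ∑ Q ∈ s.attach.erase ⟨P, hPs⟩,
          haveI := hmem Q.1 Q.2
          c Q.1 • ψ P (y Q.1) := by
        rw [hsum]; abel
      rw [h2]
      exact Submodule.sub_mem _ hmm hterm
    exact mem_nonunits_iff.mp ((IsLocalRing.mem_maximalIdeal _).mp hmem2) hu
  -- the global map
  let φ : A →ₗ[A] M := LinearMap.toSpanSingleton A M x
  have hbij : Function.Bijective φ := by
    apply bijective_of_localized_maximal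
    intro P hP
    let c1 : LocalizedModule P.primeCompl A ≃ₗ[A] Localization.AtPrime P :=
      IsLocalizedModule.iso P.primeCompl (Algebra.linearMap A (Localization.AtPrime P))
    have hu := hxu P
    have hcomp : (E P).toLinearMap ∘ₗ ((LocalizedModule.map P.primeCompl φ).restrictScalars A)
        = (LinearMap.mul A (Localization.AtPrime P) (ψ P x)) ∘ₗ c1.toLinearMap := by
      apply IsLocalizedModule.ext P.primeCompl
        (LocalizedModule.mkLinearMap P.primeCompl A)
        (IsLocalizedModule.map_units (Algebra.linearMap A (Localization.AtPrime P)))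
      refine LinearMap.ext fun a => ?_
      simp only [LinearMap.coe_comp, Function.comp_apply]
      have h1 : (LocalizedModule.map P.primeCompl φ)
          ((LocalizedModule.mkLinearMap P.primeCompl A) a)
          = (LocalizedModule.mkLinearMap P.primeCompl M) (a • x) := by
        simp [φ, LinearMap.toSpanSingleton_apply, LocalizedModule.smul'_mk]
      have h2 : c1 ((LocalizedModule.mkLinearMap P.primeCompl A) a)
          = algebraMap A (Localization.AtPrime P) a := by
        simp [c1, IsLocalizedModule.iso_apply_mk, IsLocalizedModule.mk'_one]
      simp only [LinearMap.coe_comp, Function.comp_apply, LinearMap.coe_restrictScalars,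
        LinearEquiv.coe_coe, h1, h2]
      have h3 : (E P) ((LocalizedModule.mkLinearMap P.primeCompl M) (a • x))
          = a • ψ P x := by simp [ψ, map_smul]
      rw [h3, LinearMap.mul_apply', Algebra.smul_def, mul_comm]
    have hfun : ⇑(LocalizedModule.map P.primeCompl φ)
        = ⇑(E P).symm ∘ (fun u => (ψ P x) * u) ∘ ⇑c1 := by
      funext z
      have h4 := LinearMap.congr_fun hcomp z
      simp only [LinearMap.coe_comp, Function.comp_apply, LinearMap.coe_restrictScalars,
        LinearEquiv.coe_coe, LinearMap.mul_apply'] at h4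
      simp only [Function.comp_apply]
      exact ((LinearEquiv.symm_apply_eq (E P)).mpr h4.symm).symm
    rw [hfun]
    have hmul : Function.Bijective (fun u : Localization.AtPrime P => (ψ P x) * u) := by
      constructor
      · intro a b hab
        have := congrArg (fun w => (↑hu.unit⁻¹ : Localization.AtPrime P) * w) hab
        simpa [← mul_assoc, IsUnit.val_inv_mul] using this
      · intro w
        refine ⟨(↑hu.unit⁻¹ : Localization.AtPrime P) * w, ?_⟩
        simp [← mul_assoc, IsUnit.mul_val_inv]
    exact ((E P).symm.bijective.comp hmul).comp c1.bijective
  exact ⟨(LinearEquiv.ofBijective φ hbij).symm⟩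

/-- Transfer a trivialization at a prime of `S` to the corresponding prime of a
localization of `S`. -/
theorem transfer_loc {S : Type*} [CommRing S] {L : Type*} [AddCommGroup L] [Module S L]
    (T : Submonoid S) (m : Ideal (Localization T)) [hm : m.IsPrime]
    (hq : Nonempty (LocalizedModule (m.comap (algebraMap S (Localization T))).primeCompl L
      ≃ₗ[Localization.AtPrime (m.comap (algebraMap S (Localization T)))]
        Localization.AtPrime (m.comap (algebraMap S (Localization T))))) :
    Nonempty (LocalizedModule m.primeCompl (LocalizedModule T L)
      ≃ₗ[Localization.AtPrime m] Localization.AtPrime m) := by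
  set q := m.comap (algebraMap S (Localization T)) with hqdef
  have hq' : T ≤ q.primeCompl := fun x hx H ↦
    hm.ne_top (Ideal.eq_top_of_isUnit_mem _ H (IsLocalization.map_units _ ⟨x, hx⟩))
  let Rq := Localization.AtPrime q
  let Lq := LocalizedModule q.primeCompl L
  letI : Algebra (Localization T) Rq :=
    IsLocalization.localizationAlgebraOfSubmonoidLe _ _ T q.primeCompl hq'
  haveI : IsScalarTower S (Localization T) Rq :=
    IsLocalization.localization_isScalarTower_of_submonoid_le ..
  haveI : IsLocalization.AtPrime Rq m := by
    have := IsLocalization.isLocalization_of_submonoid_le (Localization T) Rq _ _ hq'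
    apply IsLocalization.isLocalization_of_is_exists_mul_mem _
      (Submonoid.map (algebraMap S (Localization T)) q.primeCompl)
    · rintro _ ⟨x, hx, rfl⟩; exact hx
    · rintro ⟨x, hx⟩
      obtain ⟨⟨x, s⟩, rfl⟩ := IsLocalization.mk'_surjective T x
      refine ⟨algebraMap _ _ s.1, x, fun H ↦ hx ?_, by simp⟩
      dsimp only
      rw [IsLocalization.mk'_eq_mul_mk'_one]
      exact Ideal.mul_mem_right _ _ H
  letI : Module (Localization T) Lq := Module.compHom Lq (algebraMap (Localization T) Rq)
  haveI : IsScalarTower S (Localization T) Lq :=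
    ⟨fun r r' mm ↦ show algebraMap _ Rq (r • r') • mm = _ by
      simp [Algebra.smul_def, ← IsScalarTower.algebraMap_apply, mul_smul]; rfl⟩
  haveI : IsScalarTower (Localization T) Rq Lq :=
    ⟨fun r r' mm ↦ show _ = algebraMap _ Rq r • _ by rw [smul_smul (algebraMap _ Rq r) r' mm, ← Algebra.smul_def]⟩
  let l := (IsLocalizedModule.liftOfLE _ _ hq' (LocalizedModule.mkLinearMap T L)
    (LocalizedModule.mkLinearMap q.primeCompl L)).extendScalarsOfIsLocalization T
    (Localization T)
  haveI : IsLocalizedModule m.primeCompl l := by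
    have : IsLocalizedModule q.primeCompl (l.restrictScalars S) :=
      inferInstanceAs (IsLocalizedModule q.primeCompl
        (IsLocalizedModule.liftOfLE _ _ hq' (LocalizedModule.mkLinearMap T L)
        (LocalizedModule.mkLinearMap q.primeCompl L)))
    have : IsLocalizedModule (Algebra.algebraMapSubmonoid (Localization T) q.primeCompl) l :=
      IsLocalizedModule.of_restrictScalars q.primeCompl ..
    apply IsLocalizedModule.of_exists_mul_mem
      (Algebra.algebraMapSubmonoid (Localization T) q.primeCompl)
    · rintro _ ⟨x, hx, rfl⟩; exact hx
    · rintro ⟨x, hx⟩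
      obtain ⟨⟨x, s⟩, rfl⟩ := IsLocalization.mk'_surjective T x
      refine ⟨algebraMap _ _ s.1, x, fun H ↦ hx ?_, by simp⟩
      dsimp only
      rw [IsLocalization.mk'_eq_mul_mk'_one]
      exact Ideal.mul_mem_right _ _ H
  obtain ⟨e⟩ := hq
  let j : LocalizedModule m.primeCompl (LocalizedModule T L) ≃ₗ[Localization T] Lq :=
    IsLocalizedModule.linearEquiv m.primeCompl
      (LocalizedModule.mkLinearMap m.primeCompl (LocalizedModule T L)) l
  let σ : Rq ≃ₐ[Localization T] Localization.AtPrime m :=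
    IsLocalization.algEquiv m.primeCompl Rq (Localization.AtPrime m)
  let Efull : LocalizedModule m.primeCompl (LocalizedModule T L)
      ≃ₗ[Localization T] Localization.AtPrime m :=
    j ≪≫ₗ (e.restrictScalars (Localization T)) ≪≫ₗ σ.toLinearEquiv
  exact ⟨Efull.extendScalarsOfIsLocalization' m.primeCompl (Localization.AtPrime m)⟩

/-- The localization of a module-finite algebra at (the image of) a prime of the base has
finitely many maximal ideals. -/
theorem maximal_finite {R S : Type*} [CommRing R] [CommRing S] [Algebra R S] [Module.Finite R S]
    (p : Ideal R) [hp : p.IsPrime] :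
    {m : Ideal (Localization (Algebra.algebraMapSubmonoid S p.primeCompl)) | m.IsMaximal}.Finite := by
  classical
  set T := Algebra.algebraMapSubmonoid S p.primeCompl with hT
  let A := Localization T
  let Rp := Localization.AtPrime p
  letI : Algebra Rp A := localizationAlgebra p.primeCompl S
  haveI : IsScalarTower R Rp A := IsScalarTower.of_algebraMap_eq'
    (by rw [RingHom.algebraMap_toAlgebra, IsLocalization.map_comp, ← IsScalarTower.algebraMap_eq])
  haveI : Module.Finite Rp A := Module.Finite.of_isLocalization R S p.primeCompl
  haveI : Algebra.IsIntegral Rp A := Algebra.IsIntegral.of_finite _ _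
  set I : Ideal A := (IsLocalRing.maximalIdeal Rp).map (algebraMap Rp A) with hI
  let k := Rp ⧸ IsLocalRing.maximalIdeal Rp
  let B := A ⧸ I
  letI : Algebra k B := (Ideal.quotientMap I (algebraMap Rp A) Ideal.le_comap_map).toAlgebra
  haveI : IsScalarTower Rp k B := IsScalarTower.of_algebraMap_eq' (R := Rp) (S := k) (A := B) (by
    have h0 : algebraMap k B = Ideal.quotientMap I (algebraMap Rp A) Ideal.le_comap_map :=
      RingHom.algebraMap_toAlgebra _
    rw [h0, Ideal.Quotient.algebraMap_eq, Ideal.quotientMap_comp_mk]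
    rfl)
  haveI : Module.Finite Rp B :=
    Module.Finite.of_surjective (Ideal.Quotient.mkₐ Rp I).toLinearMap
      (Ideal.Quotient.mkₐ_surjective Rp I)
  haveI : Module.Finite k B := Module.Finite.of_restrictScalars_finite Rp k B
  letI : Field k := Ideal.Quotient.field (IsLocalRing.maximalIdeal Rp)
  haveI : IsArtinianRing k := DivisionRing.instIsArtinianRing
  haveI : IsArtinianRing B := IsArtinianRing.of_finite k B
  -- every maximal ideal of A contains I
  have hIle : ∀ (m : Ideal A), m.IsMaximal → I ≤ m := by
    intro m hm
    haveI := hm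
    have h1 : (m.comap (algebraMap Rp A)).IsMaximal :=
      Ideal.isMaximal_comap_of_isIntegral_of_isMaximal m
    have h2 : m.comap (algebraMap Rp A) = IsLocalRing.maximalIdeal Rp :=
      IsLocalRing.eq_maximalIdeal h1
    rw [hI, ← h2]
    exact Ideal.map_comap_le
  -- inject into primes of B
  have hfinB : {J : Ideal B | J.IsPrime}.Finite := IsArtinianRing.setOfPred_isPrime_finite B
  apply Set.Finite.of_finite_image (f := fun m => m.map (Ideal.Quotient.mk I))
  · apply hfinB.subset
    rintro _ ⟨m, hm, rfl⟩
    haveI : m.IsPrime := hm.isPrime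
    exact Ideal.map_isPrime_of_surjective Ideal.Quotient.mk_surjective
      (by simpa [Ideal.mk_ker] using hIle m hm)
  · intro m1 hm1 m2 hm2 hEq
    have hker : Ideal.comap (Ideal.Quotient.mk I) ⊥ = I := Ideal.mk_ker
    have h1 : m1 = (m1.map (Ideal.Quotient.mk I)).comap (Ideal.Quotient.mk I) := by
      rw [Ideal.comap_map_of_surjective _ Ideal.Quotient.mk_surjective, hker,
        sup_eq_left.mpr (hIle m1 hm1)]
    have h2 : m2 = (m2.map (Ideal.Quotient.mk I)).comap (Ideal.Quotient.mk I) := by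
      rw [Ideal.comap_map_of_surjective _ Ideal.Quotient.mk_surjective, hker,
        sup_eq_left.mpr (hIle m2 hm2)]
    have hEq' : m1.map (Ideal.Quotient.mk I) = m2.map (Ideal.Quotient.mk I) := hEq
    rw [h1, h2, hEq']


/-- **(Affine form of) local triviality of a line bundle along a finite morphism.**
Let `R` be noetherian, `S` a module-finite `R`-algebra (the affine incarnation of a finite
morphism `f : Y → X` of noetherian integral schemes), `L` an invertible `S`-module
(a line bundle on `Y`), and `p` a prime of `R` (a point of `X`).  Then there exists
`z ∈ R \ p` (so that `Spec R_z` is an open neighbourhood of `p`) such that the localization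
of `L` at the powers of the image of `z` in `S` (i.e. `L|_{f⁻¹(U)}`) is a free module of
rank one (i.e. trivial) over the corresponding localization of `S`. -/
theorem stmt3 {R S L : Type*} [CommRing R] [IsNoetherianRing R] [CommRing S] [Algebra R S]
    [Module.Finite R S]
    [AddCommGroup L] [Module S L] [Module.Finite S L] [Module.Projective S L]
    (hinv : ∀ (q : Ideal S) (_ : q.IsPrime),
      Nonempty (LocalizedModule q.primeCompl L ≃ₗ[Localization.AtPrime q]
        Localization.AtPrime q))
    (p : Ideal R) (hp : p.IsPrime) :
    ∃ z : R, z ∉ p ∧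
      Nonempty (LocalizedModule (Submonoid.powers (algebraMap R S z)) L
        ≃ₗ[Localization (Submonoid.powers (algebraMap R S z))]
        Localization (Submonoid.powers (algebraMap R S z))) := by
  classical
  haveI := hp
  set T : Submonoid S := Algebra.algebraMapSubmonoid S p.primeCompl with hT
  haveI : Module.FinitePresentation S L := Module.finitePresentation_of_projective S L
  haveI : Module.FinitePresentation S S := Module.finitePresentation_of_projective S S
  have hfin := maximal_finite (S := S) p
  have h : ∀ (m : Ideal (Localization T)) [m.IsMaximal],
      Nonempty (LocalizedModule m.primeCompl (LocalizedModule T L)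
        ≃ₗ[Localization.AtPrime m] Localization.AtPrime m) := by
    intro m hm
    haveI : m.IsPrime := hm.isPrime
    exact transfer_loc T m (hinv (m.comap (algebraMap S (Localization T)))
      (Ideal.IsPrime.comap _))
  obtain ⟨E⟩ := key_semilocal hfin h
  obtain ⟨r, hrT, e', -⟩ := Module.FinitePresentation.exists_lift_equiv_of_isLocalizedModule T
    (LocalizedModule.mkLinearMap T L) (Algebra.linearMap S (Localization T))
    (E.restrictScalars S)
  obtain ⟨z, hz, rfl⟩ := hrT
  refine ⟨z, hz, ?_⟩
  let c : LocalizedModule (Submonoid.powers (algebraMap R S z)) S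
      ≃ₗ[Localization (Submonoid.powers (algebraMap R S z))]
      Localization (Submonoid.powers (algebraMap R S z)) :=
    (IsLocalizedModule.iso (Submonoid.powers (algebraMap R S z))
      (Algebra.linearMap S
        (Localization (Submonoid.powers (algebraMap R S z))))).extendScalarsOfIsLocalization'
      (Submonoid.powers (algebraMap R S z)) _
  exact ⟨e'.trans c⟩
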